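/- arXiv:1811.04264 — 3 statements merged into one kernel-verified Lean document; each statement's English description precedes it below -/
import Mathlib

section
/- Let 𝕜 be a commutative ring and let A be the quotient of the free associative 𝕜-algebra 𝕜⟨a, b, c⟩ by the two-sided ideal generated by the four elements ab, ba, ac − cb, bc − ca. Then the images in A of the words c^n (n ≥ 0), a^m c^n (m ≥ 1, n ≥ 0), and b^m c^n (m ≥ 1, n ≥ 0) form a basis of A as a 𝕜-module. -/
noncomputable section

variable (𝕜 : Type*) [CommRing 𝕜]

/-- The generator `a` of the free algebra `𝕜⟨a,b,c⟩`. -/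
def aGen : FreeAlgebra 𝕜 (Fin 3) := FreeAlgebra.ι 𝕜 0

/-- The generator `b` of the free algebra `𝕜⟨a,b,c⟩`. -/
def bGen : FreeAlgebra 𝕜 (Fin 3) := FreeAlgebra.ι 𝕜 1

/-- The generator `c` of the free algebra `𝕜⟨a,b,c⟩`. -/
def cGen : FreeAlgebra 𝕜 (Fin 3) := FreeAlgebra.ι 𝕜 2

/-- The relations `ab = 0`, `ba = 0`, `ac = cb`, `bc = ca`: quotienting the free
algebra by the congruence they generate is the quotient by the two-sided ideal
generated by `ab`, `ba`, `ac - cb`, `bc - ca`. -/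
def strandRel : FreeAlgebra 𝕜 (Fin 3) → FreeAlgebra 𝕜 (Fin 3) → Prop := fun x y =>
  (x = aGen 𝕜 * bGen 𝕜 ∧ y = 0) ∨
  (x = bGen 𝕜 * aGen 𝕜 ∧ y = 0) ∨
  (x = aGen 𝕜 * cGen 𝕜 ∧ y = cGen 𝕜 * bGen 𝕜) ∨
  (x = bGen 𝕜 * cGen 𝕜 ∧ y = cGen 𝕜 * aGen 𝕜)

/-- The quotient algebra `A = 𝕜⟨a,b,c⟩/(ab, ba, ac - cb, bc - ca)`. -/
abbrev StrandAlg := RingQuot (strandRel 𝕜)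

/-- The words `cⁿ` (`n ≥ 0`), `a^(m+1)·cⁿ` and `b^(m+1)·cⁿ` (`m, n ≥ 0`),
viewed in `A`. -/
def strandWord : ℕ ⊕ (ℕ × ℕ) ⊕ (ℕ × ℕ) → StrandAlg 𝕜
  | Sum.inl n => RingQuot.mkAlgHom 𝕜 (strandRel 𝕜) (cGen 𝕜 ^ n)
  | Sum.inr (Sum.inl (m, n)) =>
      RingQuot.mkAlgHom 𝕜 (strandRel 𝕜) (aGen 𝕜 ^ (m + 1) * cGen 𝕜 ^ n)
  | Sum.inr (Sum.inr (m, n)) =>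
      RingQuot.mkAlgHom 𝕜 (strandRel 𝕜) (bGen 𝕜 ^ (m + 1) * cGen 𝕜 ^ n)

namespace StrandProof

abbrev I := ℕ ⊕ (ℕ × ℕ) ⊕ (ℕ × ℕ)
abbrev V := I →₀ 𝕜

/-- left multiplication by `a` on normal forms -/
def αf : I → (𝕜 →ₗ[𝕜] V 𝕜)
  | Sum.inl n => Finsupp.lsingle (Sum.inr (Sum.inl (0, n)))
  | Sum.inr (Sum.inl (m, n)) => Finsupp.lsingle (Sum.inr (Sum.inl (m + 1, n)))
  | Sum.inr (Sum.inr _) => 0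

def βf : I → (𝕜 →ₗ[𝕜] V 𝕜)
  | Sum.inl n => Finsupp.lsingle (Sum.inr (Sum.inr (0, n)))
  | Sum.inr (Sum.inr (m, n)) => Finsupp.lsingle (Sum.inr (Sum.inr (m + 1, n)))
  | Sum.inr (Sum.inl _) => 0

def γf : I → (𝕜 →ₗ[𝕜] V 𝕜)
  | Sum.inl n => Finsupp.lsingle (Sum.inl (n + 1))
  | Sum.inr (Sum.inl (m, n)) => Finsupp.lsingle (Sum.inr (Sum.inr (m, n + 1)))
  | Sum.inr (Sum.inr (m, n)) => Finsupp.lsingle (Sum.inr (Sum.inl (m, n + 1)))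

def α : Module.End 𝕜 (V 𝕜) := Finsupp.lsum 𝕜 (αf 𝕜)
def β : Module.End 𝕜 (V 𝕜) := Finsupp.lsum 𝕜 (βf 𝕜)
def γ : Module.End 𝕜 (V 𝕜) := Finsupp.lsum 𝕜 (γf 𝕜)

def gens : Fin 3 → Module.End 𝕜 (V 𝕜) := ![α 𝕜, β 𝕜, γ 𝕜]

def φ : FreeAlgebra 𝕜 (Fin 3) →ₐ[𝕜] Module.End 𝕜 (V 𝕜) := FreeAlgebra.lift 𝕜 (gens 𝕜)

theorem φ_rel : ∀ ⦃x y⦄, strandRel 𝕜 x y → φ 𝕜 x = φ 𝕜 y := by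
  rintro x y (⟨rfl, rfl⟩ | ⟨rfl, rfl⟩ | ⟨rfl, rfl⟩ | ⟨rfl, rfl⟩) <;>
    simp only [aGen, bGen, cGen, map_mul, map_zero, φ, FreeAlgebra.lift_ι_apply, gens,
      Matrix.cons_val_zero, Matrix.cons_val_one, Matrix.head_cons, Matrix.cons_val_two,
      Matrix.tail_cons] <;>
  · refine Finsupp.lhom_ext' fun i => LinearMap.ext_ring ?_
    rcases i with n | ⟨m, n⟩ | ⟨m, n⟩ <;>
      simp [Module.End.mul_apply, α, β, γ, αf, βf, γf, Finsupp.lsum_single]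

def ψ : StrandAlg 𝕜 →ₐ[𝕜] Module.End 𝕜 (V 𝕜) :=
  RingQuot.liftAlgHom 𝕜 ⟨φ 𝕜, φ_rel 𝕜⟩

def θ : StrandAlg 𝕜 →ₗ[𝕜] V 𝕜 :=
  (LinearMap.applyₗ (Finsupp.single (Sum.inl 0) (1 : 𝕜))).comp (ψ 𝕜).toLinearMap

theorem γ_pow (n k : ℕ) :
    (γ 𝕜 ^ n) (Finsupp.single (Sum.inl k) 1) = Finsupp.single (Sum.inl (k + n)) 1 := by
  induction n generalizing k with
  | zero => simp
  | succ n ih =>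
    rw [pow_succ', Module.End.mul_apply, ih]
    have : (γ 𝕜) (Finsupp.single (Sum.inl (k + n)) (1 : 𝕜)) =
        Finsupp.single (Sum.inl (k + n + 1)) 1 := by
      simp [γ, γf, Finsupp.lsum_single]
    rw [this, add_assoc]

theorem α_pow (m k n : ℕ) :
    (α 𝕜 ^ m) (Finsupp.single (Sum.inr (Sum.inl (k, n))) 1) =
      Finsupp.single (Sum.inr (Sum.inl (k + m, n))) 1 := by
  induction m generalizing k with
  | zero => simp
  | succ m ih =>
    rw [pow_succ', Module.End.mul_apply, ih]
    have : (α 𝕜) (Finsupp.single (Sum.inr (Sum.inl (k + m, n))) (1 : 𝕜)) =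
        Finsupp.single (Sum.inr (Sum.inl (k + m + 1, n))) 1 := by
      simp [α, αf, Finsupp.lsum_single]
    rw [this, add_assoc]

theorem β_pow (m k n : ℕ) :
    (β 𝕜 ^ m) (Finsupp.single (Sum.inr (Sum.inr (k, n))) 1) =
      Finsupp.single (Sum.inr (Sum.inr (k + m, n))) 1 := by
  induction m generalizing k with
  | zero => simp
  | succ m ih =>
    rw [pow_succ', Module.End.mul_apply, ih]
    have : (β 𝕜) (Finsupp.single (Sum.inr (Sum.inr (k + m, n))) (1 : 𝕜)) =
        Finsupp.single (Sum.inr (Sum.inr (k + m + 1, n))) 1 := by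
      simp [β, βf, Finsupp.lsum_single]
    rw [this, add_assoc]

theorem θ_word (idx : I) : θ 𝕜 (strandWord 𝕜 idx) = Finsupp.single idx 1 := by
  have hψ : ∀ x, ψ 𝕜 (RingQuot.mkAlgHom 𝕜 (strandRel 𝕜) x) = φ 𝕜 x := fun x =>
    RingQuot.liftAlgHom_mkAlgHom_apply 𝕜 _ _ _
  have key : ∀ x, θ 𝕜 (RingQuot.mkAlgHom 𝕜 (strandRel 𝕜) x) =
      (φ 𝕜 x) (Finsupp.single (Sum.inl 0) 1) := fun x => by
    show ((ψ 𝕜) _) _ = _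
    rw [hψ]
  have ha : φ 𝕜 (aGen 𝕜) = α 𝕜 := by simp [φ, aGen, gens, FreeAlgebra.lift_ι_apply]
  have hb : φ 𝕜 (bGen 𝕜) = β 𝕜 := by simp [φ, bGen, gens, FreeAlgebra.lift_ι_apply]
  have hc : φ 𝕜 (cGen 𝕜) = γ 𝕜 := by simp [φ, cGen, gens, FreeAlgebra.lift_ι_apply]
  rcases idx with n | ⟨m, n⟩ | ⟨m, n⟩
  · rw [strandWord, key, map_pow, hc]
    simpa using γ_pow 𝕜 n 0
  · rw [strandWord, key, map_mul, map_pow, map_pow, ha, hc, Module.End.mul_apply]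
    rw [γ_pow 𝕜 n 0, pow_succ, Module.End.mul_apply]
    have h0 : (α 𝕜) (Finsupp.single (Sum.inl (0 + n)) (1 : 𝕜)) =
        Finsupp.single (Sum.inr (Sum.inl (0, 0 + n))) 1 := by
      simp [α, αf, Finsupp.lsum_single]
    rw [h0, α_pow]
    simp
  · rw [strandWord, key, map_mul, map_pow, map_pow, hb, hc, Module.End.mul_apply]
    rw [γ_pow 𝕜 n 0, pow_succ, Module.End.mul_apply]
    have h0 : (β 𝕜) (Finsupp.single (Sum.inl (0 + n)) (1 : 𝕜)) =
        Finsupp.single (Sum.inr (Sum.inr (0, 0 + n))) 1 := by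
      simp [β, βf, Finsupp.lsum_single]
    rw [h0, β_pow]
    simp

theorem strand_li : LinearIndependent 𝕜 (strandWord 𝕜) := by
  apply LinearIndependent.of_comp (θ 𝕜)
  have : (θ 𝕜) ∘ (strandWord 𝕜) = fun idx : I => Finsupp.single idx (1 : 𝕜) := by
    funext idx; exact θ_word 𝕜 idx
  rw [this]
  exact (Finsupp.basisSingleOne (R := 𝕜) (ι := I)).linearIndependent


abbrev mk' : FreeAlgebra 𝕜 (Fin 3) →ₐ[𝕜] StrandAlg 𝕜 := RingQuot.mkAlgHom 𝕜 (strandRel 𝕜)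
abbrev Aq : StrandAlg 𝕜 := mk' 𝕜 (aGen 𝕜)
abbrev Bq : StrandAlg 𝕜 := mk' 𝕜 (bGen 𝕜)
abbrev Cq : StrandAlg 𝕜 := mk' 𝕜 (cGen 𝕜)

theorem hAB : Aq 𝕜 * Bq 𝕜 = 0 := by
  have := RingQuot.mkAlgHom_rel 𝕜 (s := strandRel 𝕜) (Or.inl ⟨rfl, rfl⟩)
  simpa using this

theorem hBA : Bq 𝕜 * Aq 𝕜 = 0 := by
  have := RingQuot.mkAlgHom_rel 𝕜 (s := strandRel 𝕜) (Or.inr (Or.inl ⟨rfl, rfl⟩))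
  simpa using this

theorem hAC : Aq 𝕜 * Cq 𝕜 = Cq 𝕜 * Bq 𝕜 := by
  have := RingQuot.mkAlgHom_rel 𝕜 (s := strandRel 𝕜) (Or.inr (Or.inr (Or.inl ⟨rfl, rfl⟩)))
  simpa using this

theorem hBC : Bq 𝕜 * Cq 𝕜 = Cq 𝕜 * Aq 𝕜 := by
  have := RingQuot.mkAlgHom_rel 𝕜 (s := strandRel 𝕜) (Or.inr (Or.inr (Or.inr ⟨rfl, rfl⟩)))
  simpa using this

theorem hABpow (m : ℕ) : Aq 𝕜 * Bq 𝕜 ^ (m + 1) = 0 := by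
  rw [pow_succ', ← mul_assoc, hAB, zero_mul]

theorem hBApow (m : ℕ) : Bq 𝕜 * Aq 𝕜 ^ (m + 1) = 0 := by
  rw [pow_succ', ← mul_assoc, hBA, zero_mul]

theorem hCApow (m : ℕ) : Cq 𝕜 * Aq 𝕜 ^ m = Bq 𝕜 ^ m * Cq 𝕜 := by
  induction m with
  | zero => simp
  | succ m ih =>
    rw [pow_succ', ← mul_assoc, ← hBC, mul_assoc, ih, ← mul_assoc, ← pow_succ']

theorem hCBpow (m : ℕ) : Cq 𝕜 * Bq 𝕜 ^ m = Aq 𝕜 ^ m * Cq 𝕜 := by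
  induction m with
  | zero => simp
  | succ m ih =>
    rw [pow_succ', ← mul_assoc, ← hAC, mul_assoc, ih, ← mul_assoc, ← pow_succ']

abbrev S : Submodule 𝕜 (StrandAlg 𝕜) := Submodule.span 𝕜 (Set.range (strandWord 𝕜))

theorem word_mem (idx : I) : strandWord 𝕜 idx ∈ S 𝕜 := Submodule.subset_span ⟨idx, rfl⟩

theorem word_a (m n : ℕ) :
    strandWord 𝕜 (Sum.inr (Sum.inl (m, n))) = Aq 𝕜 ^ (m + 1) * Cq 𝕜 ^ n := by
  simp [strandWord, map_mul, map_pow]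

theorem word_b (m n : ℕ) :
    strandWord 𝕜 (Sum.inr (Sum.inr (m, n))) = Bq 𝕜 ^ (m + 1) * Cq 𝕜 ^ n := by
  simp [strandWord, map_mul, map_pow]

theorem word_c (n : ℕ) : strandWord 𝕜 (Sum.inl n) = Cq 𝕜 ^ n := by
  simp [strandWord, map_pow]

theorem A_mul_word (idx : I) : Aq 𝕜 * strandWord 𝕜 idx ∈ S 𝕜 := by
  rcases idx with n | ⟨m, n⟩ | ⟨m, n⟩
  · have e : Aq 𝕜 * strandWord 𝕜 (Sum.inl n) = strandWord 𝕜 (Sum.inr (Sum.inl (0, n))) := by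
      rw [word_c, word_a, zero_add, pow_one]
    rw [e]; exact word_mem 𝕜 _
  · have e : Aq 𝕜 * strandWord 𝕜 (Sum.inr (Sum.inl (m, n))) =
        strandWord 𝕜 (Sum.inr (Sum.inl (m + 1, n))) := by
      rw [word_a, word_a, ← mul_assoc, ← pow_succ']
    rw [e]; exact word_mem 𝕜 _
  · have e : Aq 𝕜 * strandWord 𝕜 (Sum.inr (Sum.inr (m, n))) = 0 := by
      rw [word_b, ← mul_assoc, hABpow, zero_mul]
    rw [e]; exact zero_mem _

theorem B_mul_word (idx : I) : Bq 𝕜 * strandWord 𝕜 idx ∈ S 𝕜 := by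
  rcases idx with n | ⟨m, n⟩ | ⟨m, n⟩
  · have e : Bq 𝕜 * strandWord 𝕜 (Sum.inl n) = strandWord 𝕜 (Sum.inr (Sum.inr (0, n))) := by
      rw [word_c, word_b, zero_add, pow_one]
    rw [e]; exact word_mem 𝕜 _
  · have e : Bq 𝕜 * strandWord 𝕜 (Sum.inr (Sum.inl (m, n))) = 0 := by
      rw [word_a, ← mul_assoc, hBApow, zero_mul]
    rw [e]; exact zero_mem _
  · have e : Bq 𝕜 * strandWord 𝕜 (Sum.inr (Sum.inr (m, n))) =
        strandWord 𝕜 (Sum.inr (Sum.inr (m + 1, n))) := by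
      rw [word_b, word_b, ← mul_assoc, ← pow_succ']
    rw [e]; exact word_mem 𝕜 _

theorem C_mul_word (idx : I) : Cq 𝕜 * strandWord 𝕜 idx ∈ S 𝕜 := by
  rcases idx with n | ⟨m, n⟩ | ⟨m, n⟩
  · have e : Cq 𝕜 * strandWord 𝕜 (Sum.inl n) = strandWord 𝕜 (Sum.inl (n + 1)) := by
      rw [word_c, word_c, ← pow_succ']
    rw [e]; exact word_mem 𝕜 _
  · have e : Cq 𝕜 * strandWord 𝕜 (Sum.inr (Sum.inl (m, n))) =
        strandWord 𝕜 (Sum.inr (Sum.inr (m, n + 1))) := by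
      rw [word_a, word_b, ← mul_assoc, hCApow, mul_assoc, ← pow_succ']
    rw [e]; exact word_mem 𝕜 _
  · have e : Cq 𝕜 * strandWord 𝕜 (Sum.inr (Sum.inr (m, n))) =
        strandWord 𝕜 (Sum.inr (Sum.inl (m, n + 1))) := by
      rw [word_b, word_a, ← mul_assoc, hCBpow, mul_assoc, ← pow_succ']
    rw [e]; exact word_mem 𝕜 _

theorem gen_mul_mem (G : StrandAlg 𝕜) (hG : ∀ idx, G * strandWord 𝕜 idx ∈ S 𝕜) :
    ∀ v ∈ S 𝕜, G * v ∈ S 𝕜 := by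
  intro v hv
  induction hv using Submodule.span_induction with
  | mem x hx => obtain ⟨idx, rfl⟩ := hx; exact hG idx
  | zero => simp
  | add x y _ _ hx hy => rw [mul_add]; exact add_mem hx hy
  | smul r x _ hx => rw [mul_smul_comm]; exact Submodule.smul_mem _ r hx

theorem mul_mem_S (x : FreeAlgebra 𝕜 (Fin 3)) : ∀ v ∈ S 𝕜, mk' 𝕜 x * v ∈ S 𝕜 := by
  induction x using FreeAlgebra.induction with
  | grade0 r =>
    intro v hv
    rw [AlgHom.commutes, ← Algebra.smul_def]
    exact Submodule.smul_mem _ r hv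
  | grade1 i =>
    fin_cases i
    · exact gen_mul_mem 𝕜 _ (A_mul_word 𝕜)
    · exact gen_mul_mem 𝕜 _ (B_mul_word 𝕜)
    · exact gen_mul_mem 𝕜 _ (C_mul_word 𝕜)
  | mul x y ihx ihy =>
    intro v hv
    rw [map_mul, mul_assoc]
    exact ihx _ (ihy v hv)
  | add x y ihx ihy =>
    intro v hv
    rw [map_add, add_mul]
    exact add_mem (ihx v hv) (ihy v hv)

theorem span_top : ⊤ ≤ S 𝕜 := by
  rintro x -
  obtain ⟨y, rfl⟩ := RingQuot.mkAlgHom_surjective 𝕜 (strandRel 𝕜) x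
  have h1 : (1 : StrandAlg 𝕜) ∈ S 𝕜 := by
    have : strandWord 𝕜 (Sum.inl 0) = 1 := by rw [word_c, pow_zero]
    rw [← this]; exact word_mem 𝕜 _
  simpa using mul_mem_S 𝕜 y 1 h1

end StrandProof


/-- **Gröbner basis claim for the strand algebra.**
The images in `A = 𝕜⟨a,b,c⟩/(ab, ba, ac - cb, bc - ca)` of the words
`cⁿ` (`n ≥ 0`), `aᵐcⁿ` (`m ≥ 1`, `n ≥ 0`) and `bᵐcⁿ` (`m ≥ 1`, `n ≥ 0`)
form a basis of `A` as a `𝕜`-module. -/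
theorem stmt_14 :
    ∃ B : Module.Basis (ℕ ⊕ (ℕ × ℕ) ⊕ (ℕ × ℕ)) 𝕜 (StrandAlg 𝕜),
      ∀ idx, B idx = strandWord 𝕜 idx :=
  ⟨Module.Basis.mk (StrandProof.strand_li 𝕜) (StrandProof.span_top 𝕜), fun idx =>
    Module.Basis.mk_apply (StrandProof.strand_li 𝕜) (StrandProof.span_top 𝕜) idx⟩

end
end

section
/- Let 𝕜 be a commutative ring, k ≥ 2, and R = 𝕜[x_1,…,x_k]/(x_1x_2⋯x_k). Fix 2 ≤ j ≤ m ≤ k and let I ⊆ [1,k] be a nonempty subinterval. Let μ : R/(x_{[j,m]}) → R/(x_{[j−1,m]}) be the R-linear map given by multiplication by x_{j−1} (well defined since x_{j−1}·(x_{[j,m]}) ⊆ (x_{[j−1,m]})), and consider the R-linear map Hom_R(R/(x_{[j−1,m]}), R/(x_I)) → Hom_R(R/(x_{[j,m]}), R/(x_I)) given by precomposition with μ. Then its cokernel is zero if I is not contained in [j,k], and is isomorphic as an R-module to R/((x_{j−1}) + (x_{I∩[j,m]})) if I ⊆ [j,k]. -/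
open MvPolynomial

/-- The ring `R = 𝕜[x₁,…,x_k]/(x₁x₂⋯x_k)`, with variables indexed by `Fin k`
(the variable `x_m` of the paper, `1 ≤ m ≤ k`, corresponds to `m - 1 : Fin k`). -/
abbrev NodalRing (𝕜 : Type*) [CommRing 𝕜] (k : ℕ) : Type _ :=
  MvPolynomial (Fin k) 𝕜 ⧸
    Ideal.span {∏ i : Fin k, (X i : MvPolynomial (Fin k) 𝕜)}

/-- `x_{[a,b]}`: the image in `R` of the monomial `∏_{a ≤ m ≤ b} x_m`
(an empty product is `1`). -/
noncomputable def xIcc (𝕜 : Type*) [CommRing 𝕜] (k a b : ℕ) : NodalRing 𝕜 k :=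
  Ideal.Quotient.mk _
    (∏ t ∈ Finset.univ.filter (fun t : Fin k => a ≤ (t : ℕ) + 1 ∧ (t : ℕ) + 1 ≤ b),
      X t)

namespace Stmt15

variable {𝕜 : Type*} [CommRing 𝕜] {k : ℕ}

/-- indicator exponent vector of a finite set of variables -/
noncomputable def ind (S : Finset (Fin k)) : Fin k →₀ ℕ := ∑ i ∈ S, Finsupp.single i 1

lemma ind_apply (S : Finset (Fin k)) (i : Fin k) : ind S i = if i ∈ S then 1 else 0 := by
  classical
  rw [ind, Finset.sum_apply']
  simp [Finsupp.single_apply]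

lemma mS_eq (S : Finset (Fin k)) :
    (∏ i ∈ S, X i : MvPolynomial (Fin k) 𝕜) = monomial (ind S) 1 := by
  rw [ind, monomial_sum_one]
  rfl

lemma ind_le_def {S : Finset (Fin k)} {f : Fin k →₀ ℕ} :
    ind S ≤ f ↔ ∀ i ∈ S, 1 ≤ f i := by
  rw [Finsupp.le_def]
  constructor
  · intro h i hi
    have := h i
    rwa [ind_apply, if_pos hi] at this
  · intro h i
    rw [ind_apply]
    split_ifs with hi
    · exact h i hi
    · exact Nat.zero_le _

lemma ind_mono {S T : Finset (Fin k)} (h : S ⊆ T) : ind S ≤ ind T := by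
  rw [Finsupp.le_def]
  intro i
  rw [ind_apply, ind_apply]
  split_ifs with h1 h2
  · exact le_rfl
  · exact absurd (h h1) h2
  all_goals omega

lemma ind_insert {c : Fin k} {S : Finset (Fin k)} (h : c ∉ S) :
    ind (insert c S) = ind {c} + ind S := by
  classical
  rw [ind, ind, ind, Finset.sum_insert h, Finset.sum_singleton]

lemma ind_union {S T : Finset (Fin k)} (h : Disjoint S T) :
    ind (S ∪ T) = ind S + ind T := by
  classical
  rw [ind, ind, ind, Finset.sum_union h]



lemma mem_span_pair_mono {u v : Fin k →₀ ℕ} {p : MvPolynomial (Fin k) 𝕜} :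
    p ∈ Ideal.span {(monomial u 1 : MvPolynomial (Fin k) 𝕜), monomial v 1} ↔
      ∀ e ∈ p.support, u ≤ e ∨ v ≤ e := by
  have h : ({(monomial u 1 : MvPolynomial (Fin k) 𝕜), monomial v 1} : Set _) =
      (fun s => monomial s (1 : 𝕜)) '' {u, v} := by rw [Set.image_pair]
  rw [h, mem_ideal_span_monomial_image]
  simp only [Set.mem_insert_iff, Set.mem_singleton_iff, exists_eq_or_imp, exists_eq_left]

lemma mem_span_triple_mono {u v w : Fin k →₀ ℕ} {p : MvPolynomial (Fin k) 𝕜} :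
    p ∈ Ideal.span {(monomial u 1 : MvPolynomial (Fin k) 𝕜), monomial v 1, monomial w 1} ↔
      ∀ e ∈ p.support, u ≤ e ∨ v ≤ e ∨ w ≤ e := by
  have h : ({(monomial u 1 : MvPolynomial (Fin k) 𝕜), monomial v 1, monomial w 1} : Set _) =
      (fun s => monomial s (1 : 𝕜)) '' {u, v, w} := by
    rw [Set.image_insert_eq, Set.image_pair]
  rw [h, mem_ideal_span_monomial_image]
  simp only [Set.mem_insert_iff, Set.mem_singleton_iff, exists_eq_or_imp, exists_eq_left]

lemma monomial_mul_eq (u : Fin k →₀ ℕ) (p : MvPolynomial (Fin k) 𝕜) :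
    (monomial u 1) * p = ∑ e ∈ p.support, monomial (u + e) (coeff e p) := by
  conv_lhs => rw [p.as_sum]
  rw [Finset.mul_sum]
  exact Finset.sum_congr rfl fun e _ => by rw [monomial_mul, one_mul]

lemma support_monomial_mul (u : Fin k →₀ ℕ) (p : MvPolynomial (Fin k) 𝕜) :
    ∀ d ∈ (monomial u 1 * p).support, ∃ e ∈ p.support, d = u + e := by
  intro d hd
  rw [monomial_mul_eq] at hd
  have := MvPolynomial.support_sum hd
  rw [Finset.mem_biUnion] at this
  obtain ⟨e, he, hde⟩ := this
  have := MvPolynomial.support_monomial_subset hde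
  rw [Finset.mem_singleton] at this
  exact ⟨e, he, this⟩


lemma ind_le_add_iff {S U : Finset (Fin k)} {e : Fin k →₀ ℕ} :
    ind U ≤ ind S + e ↔ ind (U \ S) ≤ e := by
  classical
  rw [Finsupp.le_def, Finsupp.le_def]
  constructor <;> intro h i <;> have hi := h i <;>
    simp only [Finsupp.add_apply, ind_apply, Finset.mem_sdiff] at hi ⊢ <;>
    by_cases h1 : i ∈ U <;> by_cases h2 : i ∈ S <;>
    simp only [h1, h2, if_true, if_false, and_true, and_false, not_true, not_false_iff,
      if_neg, true_and, false_and] at hi ⊢ <;> omega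

lemma ind_erase_le {S : Finset (Fin k)} (c : Fin k) {e : Fin k →₀ ℕ} (h : ind S ≤ e) :
    ind (S.erase c) ≤ e - ind {c} := by
  classical
  rw [Finsupp.le_def] at h ⊢
  intro i
  have hi := h i
  rw [ind_apply] at hi
  rw [ind_apply, Finsupp.tsub_apply, ind_apply]
  rcases eq_or_ne i c with rfl | h2
  · rw [if_neg (Finset.notMem_erase i S), if_pos (Finset.mem_singleton_self i)]
    exact Nat.zero_le _
  · have hnc : i ∉ ({c} : Finset (Fin k)) := by simp [h2]
    rw [if_neg hnc, Nat.sub_zero]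
    by_cases h1 : i ∈ S
    · rw [if_pos (Finset.mem_erase.mpr ⟨h2, h1⟩)]
      rwa [if_pos h1] at hi
    · rw [if_neg (fun hc => h1 (Finset.mem_erase.mp hc).2)]
      exact Nat.zero_le _

lemma exists_div (S : Finset (Fin k)) (p : MvPolynomial (Fin k) 𝕜) :
    ∃ q r : MvPolynomial (Fin k) 𝕜,
      p = monomial (ind S) 1 * q + r ∧
      (∀ e ∈ q.support, ∃ e' ∈ p.support, ind S ≤ e' ∧ e = e' - ind S) ∧
      (∀ e ∈ r.support, e ∈ p.support ∧ ¬ ind S ≤ e) := by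
  classical
  refine ⟨∑ e ∈ p.support.filter (fun e => ind S ≤ e), monomial (e - ind S) (coeff e p),
    ∑ e ∈ p.support.filter (fun e => ¬ ind S ≤ e), monomial e (coeff e p), ?_, ?_, ?_⟩
  · rw [Finset.mul_sum]
    have h1 : ∀ e ∈ p.support.filter (fun e => ind S ≤ e),
        monomial (ind S) (1:𝕜) * monomial (e - ind S) (coeff e p) = monomial e (coeff e p) := by
      intro e he
      rw [Finset.mem_filter] at he
      rw [monomial_mul, one_mul, add_tsub_cancel_of_le he.2]
    rw [Finset.sum_congr rfl h1]
    conv_lhs => rw [p.as_sum]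
    rw [← Finset.sum_filter_add_sum_filter_not p.support (fun e => ind S ≤ e)]
  · intro e he
    have := MvPolynomial.support_sum he
    rw [Finset.mem_biUnion] at this
    obtain ⟨e', he', hee⟩ := this
    rw [Finset.mem_filter] at he'
    have := MvPolynomial.support_monomial_subset hee
    rw [Finset.mem_singleton] at this
    exact ⟨e', he'.1, he'.2, this⟩
  · intro e he
    have := MvPolynomial.support_sum he
    rw [Finset.mem_biUnion] at this
    obtain ⟨e', he', hee⟩ := this
    rw [Finset.mem_filter] at he'
    have := MvPolynomial.support_monomial_subset hee
    rw [Finset.mem_singleton] at this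
    subst this
    exact he'

lemma monomial_mul_mem_span_pair_iff (S U V : Finset (Fin k)) (p : MvPolynomial (Fin k) 𝕜) :
    monomial (ind S) 1 * p ∈
        Ideal.span {(monomial (ind U) 1 : MvPolynomial (Fin k) 𝕜), monomial (ind V) 1} ↔
      ∀ e ∈ p.support, ind (U \ S) ≤ e ∨ ind (V \ S) ≤ e := by
  rw [mem_span_pair_mono]
  constructor
  · intro h e he
    have hne : coeff (ind S + e) (monomial (ind S) 1 * p) ≠ 0 := by
      rw [coeff_monomial_mul, one_mul]
      exact mem_support_iff.mp he
    have := h _ (mem_support_iff.mpr hne)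
    rcases this with h1 | h1
    · exact Or.inl (ind_le_add_iff.mp h1)
    · exact Or.inr (ind_le_add_iff.mp h1)
  · intro h d hd
    obtain ⟨e, he, rfl⟩ := support_monomial_mul _ _ d hd
    rcases h e he with h1 | h1
    · exact Or.inl (ind_le_add_iff.mpr h1)
    · exact Or.inr (ind_le_add_iff.mpr h1)


section hom
variable {R M : Type*} [CommRing R] [AddCommGroup M] [Module R M]

lemma smul_annih (f : R) (φ : (R ⧸ Ideal.span {f}) →ₗ[R] M) :
    f • φ (Submodule.Quotient.mk 1) = 0 := by
  rw [← map_smul, ← Submodule.Quotient.mk_smul, smul_eq_mul, mul_one]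
  have h0 : (Submodule.Quotient.mk f : R ⧸ Ideal.span {f}) = 0 :=
    (Submodule.Quotient.mk_eq_zero _).mpr (Ideal.mem_span_singleton_self f)
  rw [h0, map_zero]

noncomputable def homOf (f : R) (s : M) (hs : f • s = 0) :
    (R ⧸ Ideal.span {f}) →ₗ[R] M :=
  Submodule.liftQ _ (LinearMap.toSpanSingleton R M s)
    (Submodule.span_le.mpr (by
      rintro x hx
      rw [Set.mem_singleton_iff] at hx
      subst hx
      rw [SetLike.mem_coe, LinearMap.mem_ker, LinearMap.toSpanSingleton_apply]
      exact hs))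

lemma homOf_mk (f : R) (s : M) (hs : f • s = 0) (r : R) :
    homOf f s hs (Submodule.Quotient.mk r) = r • s := rfl

lemma hom_ext_cyclic {f : R} {φ ψ : (R ⧸ Ideal.span {f}) →ₗ[R] M}
    (h : φ (Submodule.Quotient.mk 1) = ψ (Submodule.Quotient.mk 1)) : φ = ψ := by
  refine LinearMap.ext fun x => ?_
  obtain ⟨r, rfl⟩ := Submodule.Quotient.mk_surjective _ x
  have hr : (Submodule.Quotient.mk r : R ⧸ Ideal.span {f}) = r • Submodule.Quotient.mk 1 := by
    rw [← Submodule.Quotient.mk_smul, smul_eq_mul, mul_one]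
  rw [hr, map_smul, map_smul, h]

end hom


end Stmt15

open Stmt15

set_option maxHeartbeats 4000000 in
set_option synthInstance.maxHeartbeats 400000 in
/-- **Componentwise identification of `M{[j-1],[j,m]}` with an extension by zero.**
For `2 ≤ j ≤ m ≤ k` and a nonempty subinterval `I = [a,b] ⊆ [1,k]`, let
`μ : R/(x_{[j,m]}) → R/(x_{[j-1,m]})` be multiplication by `x_{j-1}`.  The cokernel
of precomposition with `μ`, as a map
`Hom_R(R/(x_{[j-1,m]}), R/(x_I)) → Hom_R(R/(x_{[j,m]}), R/(x_I))`,
is zero if `I ⊄ [j,k]`, and is isomorphic to `R/((x_{j-1}) + (x_{I ∩ [j,m]}))`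
if `I ⊆ [j,k]`. -/
theorem stmt_15 (𝕜 : Type*) [CommRing 𝕜] (k : ℕ) (hk : 2 ≤ k)
    (j m : ℕ) (hj : 2 ≤ j) (hjm : j ≤ m) (hmk : m ≤ k)
    (a b : ℕ) (ha : 1 ≤ a) (hab : a ≤ b) (hbk : b ≤ k) :
    ∃ (μ : (NodalRing 𝕜 k ⧸ Ideal.span {xIcc 𝕜 k j m}) →ₗ[NodalRing 𝕜 k]
          (NodalRing 𝕜 k ⧸ Ideal.span {xIcc 𝕜 k (j - 1) m}))
      (T : ((NodalRing 𝕜 k ⧸ Ideal.span {xIcc 𝕜 k (j - 1) m}) →ₗ[NodalRing 𝕜 k]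
              (NodalRing 𝕜 k ⧸ Ideal.span {xIcc 𝕜 k a b})) →ₗ[NodalRing 𝕜 k]
           ((NodalRing 𝕜 k ⧸ Ideal.span {xIcc 𝕜 k j m}) →ₗ[NodalRing 𝕜 k]
              (NodalRing 𝕜 k ⧸ Ideal.span {xIcc 𝕜 k a b}))),
      (∀ s : NodalRing 𝕜 k,
        μ (Submodule.Quotient.mk s)
          = Submodule.Quotient.mk
              ((Ideal.Quotient.mk _ (X (⟨j - 2, by omega⟩ : Fin k)) :
                NodalRing 𝕜 k) * s)) ∧
      (∀ φ, T φ = φ.comp μ) ∧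
      (¬ Finset.Icc a b ⊆ Finset.Icc j k → Function.Surjective T) ∧
      (Finset.Icc a b ⊆ Finset.Icc j k → Nonempty
        (((((NodalRing 𝕜 k ⧸ Ideal.span {xIcc 𝕜 k j m}) →ₗ[NodalRing 𝕜 k]
              (NodalRing 𝕜 k ⧸ Ideal.span {xIcc 𝕜 k a b})) ⧸ LinearMap.range T))
          ≃ₗ[NodalRing 𝕜 k]
          (NodalRing 𝕜 k ⧸
            (Ideal.span {(Ideal.Quotient.mk _ (X (⟨j - 2, by omega⟩ : Fin k)) :
                NodalRing 𝕜 k)} ⊔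
             Ideal.span {xIcc 𝕜 k (max a j) (min b m)})))) := by
  have hxI : ∀ a' b' : ℕ, xIcc 𝕜 k a' b' = Ideal.Quotient.mk
      (Ideal.span {∏ i : Fin k, (X i : MvPolynomial (Fin k) 𝕜)})
      (monomial (ind (Finset.univ.filter
        (fun t : Fin k => a' ≤ (t : ℕ) + 1 ∧ (t : ℕ) + 1 ≤ b'))) 1) := by
    intro a' b'
    rw [xIcc]
    exact congrArg _ (mS_eq _)
  set c : Fin k := ⟨j - 2, by omega⟩ with hc
  set A : Finset (Fin k) :=
    Finset.univ.filter (fun t : Fin k => j ≤ (t : ℕ) + 1 ∧ (t : ℕ) + 1 ≤ m) with hA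
  set A' : Finset (Fin k) :=
    Finset.univ.filter (fun t : Fin k => j - 1 ≤ (t : ℕ) + 1 ∧ (t : ℕ) + 1 ≤ m) with hA'
  set I : Finset (Fin k) :=
    Finset.univ.filter (fun t : Fin k => a ≤ (t : ℕ) + 1 ∧ (t : ℕ) + 1 ≤ b) with hI
  have hf2 : xIcc 𝕜 k j m = Ideal.Quotient.mk _ (monomial (ind A) 1) := hxI j m
  have hf1 : xIcc 𝕜 k (j - 1) m = Ideal.Quotient.mk _ (monomial (ind A') 1) := hxI (j - 1) m
  have hfI : xIcc 𝕜 k a b = Ideal.Quotient.mk _ (monomial (ind I) 1) := hxI a b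
  have hcA : c ∉ A := by
    simp only [hA, Finset.mem_filter, Finset.mem_univ, true_and, hc]
    omega
  have hAA' : A' = insert c A := by
    ext t
    simp only [hA, hA', Finset.mem_filter, Finset.mem_univ, true_and, Finset.mem_insert,
      hc, Fin.ext_iff]
    omega
  have hXc : (X c : MvPolynomial (Fin k) 𝕜) = monomial (ind {c}) 1 := by
    rw [← mS_eq, Finset.prod_singleton]
  have hmoA' : (monomial (ind A') 1 : MvPolynomial (Fin k) 𝕜)
      = X c * monomial (ind A) 1 := by
    rw [hAA', ind_insert hcA, hXc, monomial_mul, one_mul]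
  have hmul : (Ideal.Quotient.mk _ (X c) : NodalRing 𝕜 k) * xIcc 𝕜 k j m
      = xIcc 𝕜 k (j - 1) m := by
    rw [hf1, hf2]
    refine Eq.trans (map_mul (Ideal.Quotient.mk _) (X c) (monomial (ind A) 1)).symm ?_
    exact congrArg _ hmoA'.symm
  set ξR : NodalRing 𝕜 k := Ideal.Quotient.mk _ (X c) with hξR
  -- the multiplication map μ
  have hker : Ideal.span {xIcc 𝕜 k j m} ≤ LinearMap.ker
      ((Ideal.span {xIcc 𝕜 k (j - 1) m}).mkQ.comp
        (LinearMap.toSpanSingleton (NodalRing 𝕜 k) (NodalRing 𝕜 k) ξR)) := by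
    refine Submodule.span_le.mpr ?_
    rintro x hx
    rw [Set.mem_singleton_iff] at hx
    subst hx
    rw [SetLike.mem_coe, LinearMap.mem_ker, LinearMap.comp_apply,
      LinearMap.toSpanSingleton_apply, Submodule.mkQ_apply, Submodule.Quotient.mk_eq_zero,
      smul_eq_mul, mul_comm, hmul]
    exact Ideal.mem_span_singleton_self _
  set μ : (NodalRing 𝕜 k ⧸ Ideal.span {xIcc 𝕜 k j m}) →ₗ[NodalRing 𝕜 k]
      (NodalRing 𝕜 k ⧸ Ideal.span {xIcc 𝕜 k (j - 1) m}) :=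
    Submodule.liftQ _ _ hker with hμ
  have hμapp : ∀ s : NodalRing 𝕜 k,
      μ (Submodule.Quotient.mk s) = Submodule.Quotient.mk (ξR * s) := by
    intro s
    rw [hμ, Submodule.liftQ_apply, LinearMap.comp_apply, LinearMap.toSpanSingleton_apply,
      Submodule.mkQ_apply, smul_eq_mul, mul_comm]
  set T := LinearMap.lcomp (NodalRing 𝕜 k) (NodalRing 𝕜 k ⧸ Ideal.span {xIcc 𝕜 k a b}) μ
    with hT
  -- shared infrastructure
  set JP : Ideal (MvPolynomial (Fin k) 𝕜) :=
    Ideal.span {monomial (ind (Finset.univ : Finset (Fin k))) 1, monomial (ind I) 1} with hJP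
  have htop : (∏ i : Fin k, (X i : MvPolynomial (Fin k) 𝕜))
      = monomial (ind (Finset.univ : Finset (Fin k))) 1 := mS_eq _
  have hmkmul : ∀ u v : MvPolynomial (Fin k) 𝕜,
      (Ideal.Quotient.mk _ u : NodalRing 𝕜 k) * Ideal.Quotient.mk _ v
        = Ideal.Quotient.mk _ (u * v) := fun u v => (map_mul _ u v).symm
  have memW : ∀ p : MvPolynomial (Fin k) 𝕜,
      (Ideal.Quotient.mk _ p : NodalRing 𝕜 k) ∈ Ideal.span {xIcc 𝕜 k a b} ↔ p ∈ JP := by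
    intro p
    have hspan : Ideal.span {xIcc 𝕜 k a b}
        = (Ideal.span {(monomial (ind I) 1 : MvPolynomial (Fin k) 𝕜)}).map
            (Ideal.Quotient.mk (Ideal.span {∏ i : Fin k, (X i : MvPolynomial (Fin k) 𝕜)})) := by
      rw [Ideal.map_span, Set.image_singleton, hfI]
    rw [hspan, Ideal.mem_quotient_iff_mem_sup]
    have hsup : Ideal.span {(monomial (ind I) 1 : MvPolynomial (Fin k) 𝕜)}
        ⊔ Ideal.span {∏ i : Fin k, (X i : MvPolynomial (Fin k) 𝕜)} = JP := by
      rw [htop, hJP, ← Ideal.span_union, Set.singleton_union]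
      congr 1
      exact Set.pair_comm _ _
    rw [hsup]
  have hWzero : ∀ p : MvPolynomial (Fin k) 𝕜, p ∈ JP →
      (Submodule.Quotient.mk (Ideal.Quotient.mk _ p) :
        NodalRing 𝕜 k ⧸ Ideal.span {xIcc 𝕜 k a b}) = 0 :=
    fun p hp => (Submodule.Quotient.mk_eq_zero _).mpr ((memW p).mpr hp)
  have hsmulmk : ∀ u v : MvPolynomial (Fin k) 𝕜,
      (Ideal.Quotient.mk _ u : NodalRing 𝕜 k) •
        (Submodule.Quotient.mk (Ideal.Quotient.mk _ v) :
          NodalRing 𝕜 k ⧸ Ideal.span {xIcc 𝕜 k a b})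
      = Submodule.Quotient.mk (Ideal.Quotient.mk _ (u * v)) := by
    intro u v
    rw [← Submodule.Quotient.mk_smul, smul_eq_mul, hmkmul]
  have hmksub : ∀ u v : MvPolynomial (Fin k) 𝕜,
      (Submodule.Quotient.mk (Ideal.Quotient.mk _ u) :
          NodalRing 𝕜 k ⧸ Ideal.span {xIcc 𝕜 k a b})
        - Submodule.Quotient.mk (Ideal.Quotient.mk _ v)
      = Submodule.Quotient.mk (Ideal.Quotient.mk _ (u - v)) := by
    intro u v
    rw [map_sub, Submodule.Quotient.mk_sub]
  have hUA' : Finset.univ \ A' = (Finset.univ \ A).erase c := by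
    rw [hAA']
    ext t
    simp only [Finset.mem_sdiff, Finset.mem_univ, true_and, Finset.mem_erase,
      Finset.mem_insert]
    tauto
  have hIA' : I \ A' = (I \ A).erase c := by
    rw [hAA']
    ext t
    simp only [Finset.mem_sdiff, Finset.mem_erase, Finset.mem_insert]
    tauto
  have hcU : c ∈ Finset.univ \ A := Finset.mem_sdiff.mpr ⟨Finset.mem_univ c, hcA⟩
  have hone : ∀ {e : Fin k →₀ ℕ}, ind {c} ≤ e ↔ 1 ≤ e c := by
    intro e
    rw [ind_le_def]
    constructor
    · intro h
      exact h c (Finset.mem_singleton_self c)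
    · intro h i hi
      rw [Finset.mem_singleton] at hi
      subst hi
      exact h
  refine ⟨μ, T, fun s => hμapp s, fun φ => rfl, ?_, ?_⟩
  · -- surjectivity branch
    intro hns ψ
    have haj : a < j := by
      by_contra h
      exact hns (Finset.Icc_subset_Icc (by omega) hbk)
    obtain ⟨s₀, hs₀⟩ := Submodule.Quotient.mk_surjective _ (ψ (Submodule.Quotient.mk 1))
    obtain ⟨p, rfl⟩ := Ideal.Quotient.mk_surjective s₀
    have hann := smul_annih (xIcc 𝕜 k j m) ψ
    rw [← hs₀, hf2, hsmulmk] at hann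
    have hannP : monomial (ind A) 1 * p ∈ JP :=
      (memW _).mp ((Submodule.Quotient.mk_eq_zero _).mp hann)
    rw [hJP] at hannP
    have hcond := (monomial_mul_mem_span_pair_iff A Finset.univ I p).mp hannP
    obtain ⟨q, r, hpqr, hq, hr⟩ := exists_div {c} p
    have hrJP : r ∈ JP := by
      rw [hJP, mem_span_pair_mono]
      intro e he
      obtain ⟨hep, hec⟩ := hr e he
      have h1c : ¬ (1 ≤ e c) := fun h => hec (hone.mpr h)
      rcases hcond e hep with h1 | h1
      · exact absurd (ind_le_def.mp h1 c hcU) h1c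
      · by_cases hcI : c ∈ I
        · exact absurd (ind_le_def.mp h1 c (Finset.mem_sdiff.mpr ⟨hcI, hcA⟩)) h1c
        · refine Or.inr (le_trans (ind_mono ?_) h1)
          intro t ht
          rw [Finset.mem_sdiff]
          refine ⟨ht, fun htA => ?_⟩
          have hbI : ¬ (a ≤ (c : ℕ) + 1 ∧ (c : ℕ) + 1 ≤ b) := by
            simpa [hI, Finset.mem_filter] using hcI
          simp only [hI, hA, Finset.mem_filter, Finset.mem_univ, true_and] at ht htA
          simp only [hc] at hbI
          omega
    have hqcond : ∀ e ∈ q.support, ind (Finset.univ \ A') ≤ e ∨ ind (I \ A') ≤ e := by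
      intro e he
      obtain ⟨e', he', hce', rfl⟩ := hq e he
      rcases hcond e' he' with h1 | h1
      · exact Or.inl (hUA' ▸ ind_erase_le c h1)
      · exact Or.inr (hIA' ▸ ind_erase_le c h1)
    have hannq : xIcc 𝕜 k (j - 1) m •
        (Submodule.Quotient.mk (Ideal.Quotient.mk _ q) :
          NodalRing 𝕜 k ⧸ Ideal.span {xIcc 𝕜 k a b}) = 0 := by
      rw [hf1, hsmulmk]
      refine hWzero _ ?_
      rw [hJP]
      exact (monomial_mul_mem_span_pair_iff A' Finset.univ I q).mpr hqcond
    refine ⟨homOf (xIcc 𝕜 k (j - 1) m) _ hannq, ?_⟩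
    refine hom_ext_cyclic ?_
    have hTval : (T (homOf (xIcc 𝕜 k (j - 1) m) _ hannq)) (Submodule.Quotient.mk 1)
        = homOf (xIcc 𝕜 k (j - 1) m) _ hannq (μ (Submodule.Quotient.mk 1)) := rfl
    rw [hTval, hμapp, mul_one, hξR, homOf_mk, hsmulmk, ← hs₀]
    rw [Submodule.Quotient.eq, ← map_sub]
    refine (memW _).mpr ?_
    have hdiff : X c * q - p = -r := by
      rw [hpqr, hXc]
      ring
    rw [hdiff]
    exact neg_mem hrJP
  · -- isomorphism branch
    intro hsub
    have haj : j ≤ a := by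
      have h1 := hsub (Finset.mem_Icc.mpr ⟨le_refl a, hab⟩)
      exact (Finset.mem_Icc.mp h1).1
    have hcI : c ∉ I := by
      simp only [hI, Finset.mem_filter, Finset.mem_univ, true_and, hc]
      omega
    have hcIA : c ∉ I \ A := fun h1 => hcI (Finset.mem_sdiff.mp h1).1
    have hIAA' : I \ A' = I \ A := by
      rw [hIA']
      exact Finset.erase_eq_of_notMem hcIA
    -- the generator g and the map Ψ
    have hgann : xIcc 𝕜 k j m •
        (Submodule.Quotient.mk (Ideal.Quotient.mk _ (monomial (ind (I \ A)) 1)) :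
          NodalRing 𝕜 k ⧸ Ideal.span {xIcc 𝕜 k a b}) = 0 := by
      rw [hf2, hsmulmk]
      refine hWzero _ ?_
      rw [hJP, monomial_mul, one_mul, mem_span_pair_mono]
      intro e he
      have he' := MvPolynomial.support_monomial_subset he
      rw [Finset.mem_singleton] at he'
      subst he'
      exact Or.inr (ind_le_add_iff.mpr le_rfl)
    set gW : NodalRing 𝕜 k ⧸ Ideal.span {xIcc 𝕜 k a b} :=
      Submodule.Quotient.mk (Ideal.Quotient.mk _ (monomial (ind (I \ A)) 1)) with hgW
    set φg := homOf (xIcc 𝕜 k j m) gW hgann with hφg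
    set Ψ : NodalRing 𝕜 k →ₗ[NodalRing 𝕜 k]
        (((NodalRing 𝕜 k ⧸ Ideal.span {xIcc 𝕜 k j m}) →ₗ[NodalRing 𝕜 k]
          (NodalRing 𝕜 k ⧸ Ideal.span {xIcc 𝕜 k a b})) ⧸ LinearMap.range T) :=
      (LinearMap.range T).mkQ.comp (LinearMap.toSpanSingleton _ _ φg) with hΨ
    have hΨapp : ∀ x : NodalRing 𝕜 k,
        Ψ x = Submodule.Quotient.mk (x • φg) := fun x => rfl
    have hφg1 : φg (Submodule.Quotient.mk 1) = gW := by
      rw [hφg, homOf_mk, one_smul]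
    -- characterization of the range of T
    have hrange : ∀ φ : (NodalRing 𝕜 k ⧸ Ideal.span {xIcc 𝕜 k j m}) →ₗ[NodalRing 𝕜 k]
        (NodalRing 𝕜 k ⧸ Ideal.span {xIcc 𝕜 k a b}),
        φ ∈ LinearMap.range T ↔ ∃ p' : MvPolynomial (Fin k) 𝕜,
          monomial (ind A') 1 * p' ∈ JP ∧
          φ (Submodule.Quotient.mk 1)
            = Submodule.Quotient.mk (Ideal.Quotient.mk _ (X c * p')) := by
      intro φ
      constructor
      · rintro ⟨ψ, rfl⟩
        obtain ⟨s₀, hs₀⟩ := Submodule.Quotient.mk_surjective _ (ψ (Submodule.Quotient.mk 1))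
        obtain ⟨p', rfl⟩ := Ideal.Quotient.mk_surjective s₀
        have hann := smul_annih (xIcc 𝕜 k (j - 1) m) ψ
        rw [← hs₀, hf1, hsmulmk] at hann
        refine ⟨p', (memW _).mp ((Submodule.Quotient.mk_eq_zero _).mp hann), ?_⟩
        have h1 : (T ψ) (Submodule.Quotient.mk 1) = ψ (μ (Submodule.Quotient.mk 1)) := rfl
        have hmk1 : (Submodule.Quotient.mk ξR :
            NodalRing 𝕜 k ⧸ Ideal.span {xIcc 𝕜 k (j - 1) m}) = ξR • Submodule.Quotient.mk 1 := by
          rw [← Submodule.Quotient.mk_smul, smul_eq_mul, mul_one]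
        rw [h1, hμapp, mul_one, hmk1, map_smul, ← hs₀, hξR, hsmulmk]
      · rintro ⟨p', hp', hval⟩
        have hann' : xIcc 𝕜 k (j - 1) m •
            (Submodule.Quotient.mk (Ideal.Quotient.mk _ p') :
              NodalRing 𝕜 k ⧸ Ideal.span {xIcc 𝕜 k a b}) = 0 := by
          rw [hf1, hsmulmk]
          exact hWzero _ hp'
        refine ⟨homOf (xIcc 𝕜 k (j - 1) m) _ hann', ?_⟩
        refine hom_ext_cyclic ?_
        have h1 : (T (homOf (xIcc 𝕜 k (j - 1) m) _ hann')) (Submodule.Quotient.mk 1)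
            = homOf (xIcc 𝕜 k (j - 1) m) _ hann' (μ (Submodule.Quotient.mk 1)) := rfl
        rw [h1, hμapp, mul_one, hξR, homOf_mk, hsmulmk, hval]
    -- surjectivity of Ψ
    have hΨsurj : Function.Surjective Ψ := by
      intro y
      obtain ⟨φ, rfl⟩ := Submodule.Quotient.mk_surjective _ y
      obtain ⟨s₀, hs₀⟩ := Submodule.Quotient.mk_surjective _ (φ (Submodule.Quotient.mk 1))
      obtain ⟨p, rfl⟩ := Ideal.Quotient.mk_surjective s₀
      have hann := smul_annih (xIcc 𝕜 k j m) φ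
      rw [← hs₀, hf2, hsmulmk] at hann
      have hannP := (memW _).mp ((Submodule.Quotient.mk_eq_zero _).mp hann)
      rw [hJP] at hannP
      have hcond := (monomial_mul_mem_span_pair_iff A Finset.univ I p).mp hannP
      obtain ⟨q₀, rem, hp1, hq₀, hrem⟩ := exists_div (Finset.univ \ A) p
      have hremdiv : ∀ e ∈ rem.support, ind (I \ A) ≤ e := by
        intro e he
        obtain ⟨hep, hnd⟩ := hrem e he
        rcases hcond e hep with h1 | h1
        · exact absurd h1 hnd
        · exact h1
      obtain ⟨r, rem₂, hrem1, hrr, hrem₂⟩ := exists_div (I \ A) rem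
      have hrem₂0 : rem₂ = 0 := by
        rw [← MvPolynomial.support_eq_empty]
        exact Finset.eq_empty_of_forall_notMem
          (fun e he => (hrem₂ e he).2 (hremdiv e (hrem₂ e he).1))
      have hcUA' : c ∉ Finset.univ \ A' := by
        rw [hUA']
        exact Finset.notMem_erase _ _
      have hUsplit : Finset.univ \ A = insert c (Finset.univ \ A') := by
        rw [hUA', Finset.insert_erase hcU]
      have hmoU : (monomial (ind (Finset.univ \ A)) 1 : MvPolynomial (Fin k) 𝕜)
          = X c * monomial (ind (Finset.univ \ A')) 1 := by
        rw [hUsplit, ind_insert hcUA', hXc, monomial_mul, one_mul]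
      set p' : MvPolynomial (Fin k) 𝕜 := monomial (ind (Finset.univ \ A')) 1 * q₀ with hp'
      have hdecomp : p = X c * p' + r * monomial (ind (I \ A)) 1 := by
        rw [hp1, hrem1, hrem₂0, hmoU, hp']
        ring
      refine ⟨Ideal.Quotient.mk _ r, ?_⟩
      rw [hΨapp, Submodule.Quotient.eq, hrange]
      refine ⟨-p', ?_, ?_⟩
      · have h2 : monomial (ind A') 1 * p'
            = monomial (ind (Finset.univ : Finset (Fin k))) 1 * q₀ := by
          rw [hp', ← mul_assoc, monomial_mul, one_mul, ← ind_union Finset.disjoint_sdiff,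
            Finset.union_sdiff_of_subset (Finset.subset_univ _)]
        rw [mul_neg]
        refine neg_mem ?_
        rw [h2, hJP]
        exact Ideal.mul_mem_right _ _ (Ideal.subset_span (Set.mem_insert _ _))
      · rw [LinearMap.sub_apply, LinearMap.smul_apply, hφg1, hgW, hsmulmk, ← hs₀, hmksub]
        have hpoly : r * monomial (ind (I \ A)) 1 - p = X c * (-p') := by
          rw [hdecomp]
          ring
        rw [hpoly]
    -- the kernel of Ψ
    have hIAmax : Finset.univ.filter
        (fun t : Fin k => max a j ≤ (t : ℕ) + 1 ∧ (t : ℕ) + 1 ≤ min b m) = I ∩ A := by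
      ext t
      simp only [hI, hA, Finset.mem_filter, Finset.mem_univ, true_and, Finset.mem_inter]
      omega
    have hxmax : xIcc 𝕜 k (max a j) (min b m)
        = Ideal.Quotient.mk _ (monomial (ind (I ∩ A)) 1) := by
      rw [hxI (max a j) (min b m), hIAmax]
    have hkerΨ : LinearMap.ker Ψ
        = Ideal.span {ξR} ⊔ Ideal.span {xIcc 𝕜 k (max a j) (min b m)} := by
      have hKpair : (Ideal.span {ξR} ⊔ Ideal.span {xIcc 𝕜 k (max a j) (min b m)} :
          Ideal (NodalRing 𝕜 k)) = Ideal.span {ξR, xIcc 𝕜 k (max a j) (min b m)} := by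
        rw [← Ideal.span_union, Set.singleton_union]
      rw [hKpair]
      apply le_antisymm
      · -- ker Ψ ≤ span
        intro x hx
        obtain ⟨p, rfl⟩ := Ideal.Quotient.mk_surjective x
        rw [LinearMap.mem_ker, hΨapp, Submodule.Quotient.mk_eq_zero, hrange] at hx
        obtain ⟨p', hp', hval⟩ := hx
        rw [LinearMap.smul_apply, hφg1, hgW, hsmulmk] at hval
        have hh : p * monomial (ind (I \ A)) 1 - X c * p' ∈ JP := by
          refine (memW _).mp ?_
          rw [map_sub]
          exact (Submodule.Quotient.eq _).mp hval
        have hp3 : p ∈ Ideal.span {(monomial (ind {c}) 1 : MvPolynomial (Fin k) 𝕜),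
            monomial (ind (I ∩ A)) 1, monomial (ind (Finset.univ : Finset (Fin k))) 1} := by
          rw [mem_span_triple_mono]
          intro e he
          by_contra hcon
          push_neg at hcon
          obtain ⟨h1, h2, h3⟩ := hcon
          have hec : e c = 0 := by
            have h1' : ¬ 1 ≤ e c := fun hle => h1 (hone.mpr hle)
            omega
          have hcoP : coeff (e + ind (I \ A)) (p * monomial (ind (I \ A)) 1) = coeff e p := by
            rw [coeff_mul_monomial, mul_one]
          have hcoX : coeff (e + ind (I \ A)) (X c * p') = 0 := by
            by_contra h0
            have hmem := mem_support_iff.mpr h0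
            rw [hXc] at hmem
            obtain ⟨e₀, he₀, heq⟩ := support_monomial_mul (ind {c}) p' _ hmem
            have hfun := DFunLike.congr_fun heq c
            rw [Finsupp.add_apply, Finsupp.add_apply, ind_apply, ind_apply,
              if_pos (Finset.mem_singleton_self c), if_neg hcIA] at hfun
            omega
          have hcoh : coeff (e + ind (I \ A))
              (p * monomial (ind (I \ A)) 1 - X c * p') = 0 := by
            by_contra h0
            have hmem := mem_support_iff.mpr h0
            rw [hJP, mem_span_pair_mono] at hh
            rcases hh _ hmem with hU | hI2
            · have hUc := ind_le_def.mp hU c (Finset.mem_univ c)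
              rw [Finsupp.add_apply, ind_apply, if_neg hcIA] at hUc
              omega
            · have hIc := ind_le_add_iff.mp (by rwa [add_comm] at hI2)
              rw [Finset.sdiff_sdiff_self_left] at hIc
              exact h2 hIc
          have hzero : coeff e p = 0 := by
            have hsplit : coeff (e + ind (I \ A)) (p * monomial (ind (I \ A)) 1)
                = coeff (e + ind (I \ A)) (p * monomial (ind (I \ A)) 1 - X c * p')
                  + coeff (e + ind (I \ A)) (X c * p') := by
              rw [← MvPolynomial.coeff_add, sub_add_cancel]
            rw [← hcoP, hsplit, hcoh, hcoX, add_zero]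
          exact mem_support_iff.mp he hzero
        have hmap := Ideal.mem_map_of_mem
          (Ideal.Quotient.mk (Ideal.span {∏ i : Fin k, (X i : MvPolynomial (Fin k) 𝕜)})) hp3
        rw [Ideal.map_span] at hmap
        refine Ideal.span_le.mpr ?_ hmap
        rintro y hy
        simp only [Set.mem_image, Set.mem_insert_iff, Set.mem_singleton_iff] at hy
        obtain ⟨z, hz, rfl⟩ := hy
        rcases hz with rfl | rfl | rfl
        · rw [← hXc, ← hξR]
          exact Ideal.subset_span (Set.mem_insert _ _)
        · rw [← hxmax]
          exact Ideal.subset_span (Set.mem_insert_of_mem _ rfl)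
        · rw [← htop]
          have h0 : (Ideal.Quotient.mk (Ideal.span
              {∏ i : Fin k, (X i : MvPolynomial (Fin k) 𝕜)}))
              (∏ i : Fin k, (X i : MvPolynomial (Fin k) 𝕜)) = 0 :=
            Ideal.Quotient.eq_zero_iff_mem.mpr (Ideal.subset_span rfl)
          rw [h0]
          exact zero_mem _
      · -- span ≤ ker Ψ
        refine Submodule.span_le.mpr ?_
        rintro x hx
        rw [Set.mem_insert_iff, Set.mem_singleton_iff] at hx
        have hmemker : ∀ z : NodalRing 𝕜 k, z • φg ∈ LinearMap.range T →
            z ∈ LinearMap.ker Ψ := by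
          intro z hz
          rw [LinearMap.mem_ker, hΨapp, Submodule.Quotient.mk_eq_zero]
          exact hz
        rcases hx with rfl | rfl
        · refine hmemker _ ((hrange _).mpr ⟨monomial (ind (I \ A)) 1, ?_, ?_⟩)
          · rw [monomial_mul, one_mul, hJP, mem_span_pair_mono]
            intro e he
            have he' := MvPolynomial.support_monomial_subset he
            rw [Finset.mem_singleton] at he'
            subst he'
            refine Or.inr ?_
            rw [← hIAA']
            exact ind_le_add_iff.mpr (hIAA' ▸ le_rfl)
          · rw [LinearMap.smul_apply, hφg1, hgW, hξR, hsmulmk, hXc, monomial_mul, one_mul]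
        · refine hmemker _ ((hrange _).mpr ⟨0, ?_, ?_⟩)
          · rw [mul_zero]
            exact zero_mem _
          · rw [LinearMap.smul_apply, hφg1, hgW, hxmax, hsmulmk, monomial_mul, one_mul,
              mul_zero]
            have hIunion : I ∩ A ∪ I \ A = I := by
              ext t
              simp only [Finset.mem_union, Finset.mem_inter, Finset.mem_sdiff]
              tauto
            have hIdisj : Disjoint (I ∩ A) (I \ A) := by
              rw [Finset.disjoint_left]
              intro t ht ht'
              exact (Finset.mem_sdiff.mp ht').2 (Finset.mem_inter.mp ht).2
            rw [← ind_union hIdisj, hIunion]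
            have hz : (Submodule.Quotient.mk (Ideal.Quotient.mk _ (monomial (ind I) 1)) :
                NodalRing 𝕜 k ⧸ Ideal.span {xIcc 𝕜 k a b}) = 0 :=
              hWzero _ (by rw [hJP]; exact Ideal.subset_span (Set.mem_insert_of_mem _ rfl))
            rw [hz, map_zero]
            exact (Submodule.Quotient.mk_eq_zero _).mpr (zero_mem _)
    exact ⟨((Ψ.quotKerEquivOfSurjective hΨsurj).symm).trans
      (Submodule.quotEquivOfEq _ _ hkerΨ)⟩
end

section
/- Let k ≥ 1. For 0 ≤ a < b ≤ k and 0 ≤ a' < b' ≤ k, set S = [0,k] ∖ {a,b} and S' = [0,k] ∖ {a',b'}, which are size-(k−1) subsets of [0,k], and associate to them the intervals I = [a+1, b] and I' = [a'+1, b']. Then S and S' are close if and only if I ∩ I' ≠ ∅. -/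
/-- Two finite sets of integers are *close* if there is a bijection `g : S → S'`
with `g i ∈ {i-1, i, i+1}` for every `i ∈ S`. -/
def IsClose (S S' : Finset ℤ) : Prop :=
  ∃ g : ℤ → ℤ, Set.BijOn g ↑S ↑S' ∧ ∀ i ∈ S, g i = i - 1 ∨ g i = i ∨ g i = i + 1

lemma isClose_symm {S S' : Finset ℤ} (h : IsClose S S') : IsClose S' S := by
  obtain ⟨g, hbij, hstep⟩ := h
  have hinv := hbij.invOn_invFunOn
  refine ⟨Function.invFunOn g ↑S, hbij.symm hinv.symm, ?_⟩
  intro j hj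
  have hjS : (j : ℤ) ∈ (↑S' : Set ℤ) := by exact_mod_cast hj
  have hiS : Function.invFunOn g ↑S j ∈ (↑S : Set ℤ) := (hbij.symm hinv.symm).mapsTo hjS
  have hgi : g (Function.invFunOn g ↑S j) = j := hinv.2 hjS
  have := hstep _ (by exact_mod_cast hiS)
  omega

lemma not_close (k a b a' b' : ℤ) (ha : 0 ≤ a) (hab : a < b) (hba' : b ≤ a') (hab' : a' < b')
    (hbk' : b' ≤ k) :
    ¬ IsClose (Finset.Icc 0 k \ {a, b}) (Finset.Icc 0 k \ {a', b'}) := by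
  rintro ⟨g, hbij, hstep⟩
  have key : (Finset.Icc (b + 1) k).card ≤ (Finset.Icc b k \ {a', b'}).card := by
    apply Finset.card_le_card_of_injOn g
    · intro i hi
      rw [Finset.mem_coe, Finset.mem_Icc] at hi
      have hiS : i ∈ Finset.Icc 0 k \ ({a, b} : Finset ℤ) := by
        simp only [Finset.mem_sdiff, Finset.mem_Icc, Finset.mem_insert, Finset.mem_singleton]
        omega
      have hgi : g i ∈ Finset.Icc 0 k \ ({a', b'} : Finset ℤ) := by
        exact_mod_cast hbij.mapsTo (by exact_mod_cast hiS)
      have := hstep i hiS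
      simp only [Finset.mem_coe, Finset.mem_sdiff, Finset.mem_Icc, Finset.mem_insert,
        Finset.mem_singleton] at hgi ⊢
      omega
    · apply hbij.injOn.mono
      intro x hx
      simp only [Finset.coe_Icc, Set.mem_Icc] at hx
      simp only [Finset.coe_sdiff, Finset.coe_Icc, Finset.coe_insert, Finset.coe_singleton,
        Set.mem_diff, Set.mem_Icc, Set.mem_insert_iff, Set.mem_singleton_iff]
      omega
  have hsub : ({a', b'} : Finset ℤ) ⊆ Finset.Icc b k := by
    intro x hx
    simp only [Finset.mem_insert, Finset.mem_singleton] at hx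
    rw [Finset.mem_Icc]
    omega
  rw [Finset.card_sdiff_of_subset hsub, Finset.card_pair (by omega : a' ≠ b'), Int.card_Icc,
    Int.card_Icc] at key
  omega

set_option maxHeartbeats 2000000 in
/-- **Closeness of complements of pairs corresponds to intersecting intervals.**
For `0 ≤ a < b ≤ k` and `0 ≤ a' < b' ≤ k`, the size-`(k-1)` subsets
`S = [0,k] ∖ {a,b}` and `S' = [0,k] ∖ {a',b'}` of `[0,k]` are close if and only
if the associated intervals `I = [a+1,b]` and `I' = [a'+1,b']` intersect. -/
theorem stmt_17 (k a b a' b' : ℤ) (hk : 1 ≤ k)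
    (ha : 0 ≤ a) (hab : a < b) (hbk : b ≤ k)
    (ha' : 0 ≤ a') (hab' : a' < b') (hbk' : b' ≤ k) :
    IsClose (Finset.Icc 0 k \ {a, b}) (Finset.Icc 0 k \ {a', b'}) ↔
      (Finset.Icc (a + 1) b ∩ Finset.Icc (a' + 1) b').Nonempty := by
  constructor
  · intro h
    by_contra hne
    have hcase : b ≤ a' ∨ b' ≤ a := by
      by_contra h2
      push_neg at h2
      refine hne ⟨max (a + 1) (a' + 1), ?_⟩
      simp only [Finset.mem_inter, Finset.mem_Icc, le_max_iff, max_le_iff]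
      omega
    rcases hcase with hc | hc
    · exact not_close k a b a' b' ha hab hc hab' hbk' h
    · exact not_close k a' b' a b ha' hab' hc hab hbk (isClose_symm h)
  · rintro ⟨x, hx⟩
    rw [Finset.mem_inter, Finset.mem_Icc, Finset.mem_Icc] at hx
    set g : ℤ → ℤ := fun i =>
      if a < i ∧ i ≤ a' then i - 1 else if a' ≤ i ∧ i < a then i + 1
      else if b < i ∧ i ≤ b' then i - 1 else if b' ≤ i ∧ i < b then i + 1 else i with hg
    set g' : ℤ → ℤ := fun j =>
      if a' < j ∧ j ≤ a then j - 1 else if a ≤ j ∧ j < a' then j + 1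
      else if b' < j ∧ j ≤ b then j - 1 else if b ≤ j ∧ j < b' then j + 1 else j with hg'
    have hmem : ∀ u v w : ℤ, w ∈ (↑(Finset.Icc 0 k \ ({u, v} : Finset ℤ)) : Set ℤ) ↔
        (0 ≤ w ∧ w ≤ k) ∧ ¬(w = u ∨ w = v) := by
      intro u v w
      simp only [Finset.coe_sdiff, Finset.coe_Icc, Set.mem_diff, Set.mem_Icc,
        Finset.coe_insert, Set.mem_insert_iff, Finset.coe_singleton, Set.mem_singleton_iff]
    have hmapsg : Set.MapsTo g ↑(Finset.Icc 0 k \ ({a, b} : Finset ℤ))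
        ↑(Finset.Icc 0 k \ ({a', b'} : Finset ℤ)) := by
      intro i hi
      rw [hmem] at hi
      rw [hmem]
      simp only [hg]
      split_ifs <;> omega
    have hmapsg' : Set.MapsTo g' ↑(Finset.Icc 0 k \ ({a', b'} : Finset ℤ))
        ↑(Finset.Icc 0 k \ ({a, b} : Finset ℤ)) := by
      intro j hj
      rw [hmem] at hj
      rw [hmem]
      simp only [hg']
      split_ifs <;> omega
    have hli : Set.LeftInvOn g' g ↑(Finset.Icc 0 k \ ({a, b} : Finset ℤ)) := by
      intro i hi
      rw [hmem] at hi
      simp only [hg, hg']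
      split_ifs <;> omega
    have hri : Set.RightInvOn g' g ↑(Finset.Icc 0 k \ ({a', b'} : Finset ℤ)) := by
      intro j hj
      rw [hmem] at hj
      simp only [hg, hg']
      split_ifs <;> omega
    refine ⟨g, ⟨hmapsg, hli.injOn, hri.surjOn hmapsg'⟩, ?_⟩
    intro i hi
    rw [← Finset.mem_coe, hmem] at hi
    simp only [hg]
    split_ifs <;> omega
end
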